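/- Let A_1, A_2, A_3, A_4 lie on a sphere of radius R centered at O with |A_1A_2| = |A_3A_4|, |A_1A_3| = |A_2A_4|, |A_1A_4| = |A_2A_3| (an isosceles tetrahedron inscribed in its circumsphere with center equidistant). Then the sum of the four unit vectors from O toward the A_i is zero; hence O is the Fermat–Torricelli point of A_1A_2A_3A_4. -/

import Mathlib

open scoped RealInnerProductSpace

/-- An isosceles tetrahedron inscribed in a sphere of center O: if the four
vertices are at distance R from O, are not coplanar, and opposite edges are
pairwise equal, then the four unit vectors from O toward the vertices sum to
zero; hence O minimizes the sum of distances to the vertices (O is the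
Fermat–Torricelli point). -/
theorem stmt_14 (A : Fin 4 → EuclideanSpace ℝ (Fin 3))
    (O : EuclideanSpace ℝ (Fin 3)) (R : ℝ) (hR : 0 < R)
    (hsphere : ∀ i, dist O (A i) = R)
    (hncop : ¬ Coplanar ℝ (Set.range A))
    (h12 : dist (A 0) (A 1) = dist (A 2) (A 3))
    (h13 : dist (A 0) (A 2) = dist (A 1) (A 3))
    (h14 : dist (A 0) (A 3) = dist (A 1) (A 2)) :
    (∑ i : Fin 4, ‖A i - O‖⁻¹ • (A i - O)) = 0 ∧
    ∀ P : EuclideanSpace ℝ (Fin 3),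
      ∑ i : Fin 4, dist O (A i) ≤ ∑ i : Fin 4, dist P (A i) := by
  have hnorm : ∀ i, ‖A i - O‖ = R := by
    intro i
    rw [← hsphere i, dist_eq_norm, norm_sub_rev]
  have hself : ∀ i, ⟪A i - O, A i - O⟫ = R ^ 2 := by
    intro i
    rw [real_inner_self_eq_norm_sq, hnorm]
  have key : ∀ i j k l : Fin 4, dist (A i) (A j) = dist (A k) (A l) →
      ⟪A i - O, A j - O⟫ = ⟪A k - O, A l - O⟫ := by
    intro i j k l h
    have h2 : ‖(A i - O) - (A j - O)‖ = ‖(A k - O) - (A l - O)‖ := by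
      rw [sub_sub_sub_cancel_right, sub_sub_sub_cancel_right,
        ← dist_eq_norm, ← dist_eq_norm, h]
    have h3 := congrArg (· ^ 2) h2
    simp only [norm_sub_sq_real, hnorm] at h3
    linarith
  have ha := key 0 1 2 3 h12
  have hb := key 0 2 1 3 h13
  have hc := key 0 3 1 2 h14
  have comm : ∀ x y : EuclideanSpace ℝ (Fin 3), ⟪x, y⟫ = ⟪y, x⟫ := fun x y => real_inner_comm y x
  set s : EuclideanSpace ℝ (Fin 3) := ∑ i : Fin 4, (A i - O) with hs
  have e : ∀ i : Fin 4, ⟪s, A i - O⟫ = ⟪A 0 - O, A i - O⟫ + ⟪A 1 - O, A i - O⟫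
      + ⟪A 2 - O, A i - O⟫ + ⟪A 3 - O, A i - O⟫ := by
    intro i
    rw [hs, Fin.sum_univ_four, inner_add_left, inner_add_left, inner_add_left]
  set T : ℝ := R ^ 2 + ⟪A 0 - O, A 1 - O⟫ + ⟪A 0 - O, A 2 - O⟫ + ⟪A 0 - O, A 3 - O⟫ with hT
  have h0 : ⟪s, A 0 - O⟫ = T := by
    rw [e 0, hT]
    linarith [hself 0, comm (A 1 - O) (A 0 - O), comm (A 2 - O) (A 0 - O),
      comm (A 3 - O) (A 0 - O)]
  have h1 : ⟪s, A 1 - O⟫ = T := by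
    rw [e 1, hT]
    linarith [hself 1, comm (A 1 - O) (A 0 - O), comm (A 2 - O) (A 1 - O),
      comm (A 3 - O) (A 1 - O), hb, hc]
  have h2 : ⟪s, A 2 - O⟫ = T := by
    rw [e 2, hT]
    linarith [hself 2, comm (A 1 - O) (A 2 - O), comm (A 3 - O) (A 2 - O), ha, hc]
  have h3 : ⟪s, A 3 - O⟫ = T := by
    rw [e 3, hT]
    linarith [hself 3, comm (A 1 - O) (A 3 - O), comm (A 2 - O) (A 3 - O), ha, hb]
  have hsi : ∀ i : Fin 4, ⟪s, A i - O⟫ = T := by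
    intro i
    fin_cases i
    · exact h0
    · exact h1
    · exact h2
    · exact h3
  have htop : vectorSpan ℝ (Set.range A) = ⊤ := by
    by_contra h
    apply hncop
    rw [coplanar_iff_finrank_le_two]
    have hlt := Submodule.finrank_lt (K := ℝ) (V := EuclideanSpace ℝ (Fin 3))
      h
    have h3 : Module.finrank ℝ (EuclideanSpace ℝ (Fin 3)) = 3 := by simp
    omega
  have hs0 : s = 0 := by
    have hmem : ∀ u ∈ vectorSpan ℝ (Set.range A), ⟪s, u⟫ = 0 := by
      intro u hu
      rw [vectorSpan_def] at hu
      induction hu using Submodule.span_induction with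
      | mem x hx =>
          obtain ⟨a, ⟨i, rfl⟩, b, ⟨j, rfl⟩, rfl⟩ := hx
          simp only [vsub_eq_sub]
          have hd : A i - A j = (A i - O) - (A j - O) := by abel
          rw [hd, inner_sub_right, hsi i, hsi j, sub_self]
      | zero => exact inner_zero_right _
      | add x y _ _ hx hy => rw [inner_add_right, hx, hy, add_zero]
      | smul c x _ hx => rw [inner_smul_right, hx, mul_zero]
    have : ⟪s, s⟫ = 0 := hmem s (htop ▸ Submodule.mem_top)
    exact inner_self_eq_zero.mp this
  constructor
  · have : (∑ i : Fin 4, ‖A i - O‖⁻¹ • (A i - O)) = R⁻¹ • s := by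
      rw [hs, Finset.smul_sum]
      exact Finset.sum_congr rfl fun i _ => by rw [hnorm]
    rw [this, hs0, smul_zero]
  · intro P
    have hsum1 : ∑ i : Fin 4, dist O (A i) = 4 * R := by
      simp [hsphere, Fin.sum_univ_four]
    have hineq : ∀ i : Fin 4, ⟪A i - O, A i - P⟫ ≤ R * dist P (A i) := by
      intro i
      calc ⟪A i - O, A i - P⟫ ≤ ‖A i - O‖ * ‖A i - P‖ := real_inner_le_norm _ _
        _ = R * dist P (A i) := by rw [hnorm, dist_eq_norm, norm_sub_rev]
    have hsum2 : ∑ i : Fin 4, ⟪A i - O, A i - P⟫ = 4 * R ^ 2 := by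
      have : ∀ i : Fin 4, ⟪A i - O, A i - P⟫ = R ^ 2 + ⟪A i - O, O - P⟫ := by
        intro i
        have : A i - P = (A i - O) + (O - P) := by abel
        rw [this, inner_add_right, hself]
      simp only [this]
      have h0 : ∑ i : Fin 4, ⟪A i - O, O - P⟫ = ⟪s, O - P⟫ := by
        rw [hs, sum_inner]
      rw [Finset.sum_add_distrib, h0, hs0, inner_zero_left, add_zero,
        Finset.sum_const]
      simp
    have hfin : 4 * R ^ 2 ≤ R * ∑ i : Fin 4, dist P (A i) := by
      rw [← hsum2, Finset.mul_sum]
      exact Finset.sum_le_sum fun i _ => hineq i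
    rw [hsum1]
    nlinarith [hfin]
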